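/- Chain of inequalities used in the uniqueness proof: if M, M0 are PSD matrices satisfying A(M) = A(M0), Y2 = A* lambda + xi with <xi, M - M0> = 0, (Y2)_T = I_T (projections onto tangent space T of M0 agree with identity), and (Y2)_{T-perp} < I_{T-perp} strictly on T-perp, then Tr(M0) = Tr(M_T) + <(Y2)_{T-perp}, M> < Tr(M) whenever M_{T-perp} is nonzero. -/

import Mathlib

open scoped BigOperators Matrix

/-- The Frobenius inner product of two real matrices. -/
def frob {N : ℕ} (A B : Matrix (Fin N) (Fin N) ℝ) : ℝ :=
  ∑ i, ∑ j, A i j * B i j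

section Aux
variable {N : ℕ}

lemma frob_eq_trace (A B : Matrix (Fin N) (Fin N) ℝ) : frob A B = (Aᵀ * B).trace := by
  simp only [frob, Matrix.trace, Matrix.diag, Matrix.mul_apply, Matrix.transpose_apply]
  exact Finset.sum_comm

lemma frob_sub_left (A B C : Matrix (Fin N) (Fin N) ℝ) :
    frob (A - B) C = frob A C - frob B C := by
  simp [frob, sub_mul, Finset.sum_sub_distrib]

lemma frob_sub_right (A B C : Matrix (Fin N) (Fin N) ℝ) :
    frob A (B - C) = frob A B - frob A C := by
  simp [frob, mul_sub, Finset.sum_sub_distrib]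

lemma frob_one_left (M : Matrix (Fin N) (Fin N) ℝ) : frob 1 M = M.trace := by
  simp [frob, Matrix.one_apply, Matrix.trace, Matrix.diag]

lemma frob_zero_right (A : Matrix (Fin N) (Fin N) ℝ) : frob A 0 = 0 := by
  simp [frob]

lemma frob_sandwich (Q X W : Matrix (Fin N) (Fin N) ℝ) (hQ : Qᵀ = Q) :
    frob (Q * X * Q) W = frob X (Q * W * Q) := by
  rw [frob_eq_trace, frob_eq_trace, Matrix.transpose_mul, Matrix.transpose_mul, hQ]
  rw [Matrix.mul_assoc, Matrix.trace_mul_comm Q (Xᵀ * Q * W)]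
  rw [Matrix.mul_assoc, Matrix.mul_assoc, Matrix.mul_assoc]

lemma frob_transpose_mul_self (Z C : Matrix (Fin N) (Fin N) ℝ) :
    frob Z (Cᵀ * C) = ∑ i, (C i) ⬝ᵥ Z.mulVec (C i) := by
  have key : ∀ (f : Fin N → Fin N → Fin N → ℝ),
      ∑ j, ∑ k, ∑ i, f i j k = ∑ i, ∑ j, ∑ k, f i j k := by
    intro f
    rw [show (∑ j, ∑ k, ∑ i, f i j k) = ∑ j, ∑ i, ∑ k, f i j k from
      Finset.sum_congr rfl fun j _ => Finset.sum_comm]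
    exact Finset.sum_comm
  simp only [frob, Matrix.mul_apply, Matrix.transpose_apply, dotProduct,
    Matrix.mulVec, Finset.mul_sum]
  rw [key]
  refine Finset.sum_congr rfl fun i _ => Finset.sum_congr rfl fun j _ =>
    Finset.sum_congr rfl fun k _ => by ring

end Aux

/-- Orthogonal projection (in the Frobenius inner product) onto the tangent space
`T = {m0 vᵀ + v m0ᵀ : v}` at the rank-one matrix `m0 m0ᵀ`. -/
noncomputable def projT (N : ℕ) (m0 : Fin N → ℝ)
    (X : Matrix (Fin N) (Fin N) ℝ) : Matrix (Fin N) (Fin N) ℝ :=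
  let P := (1 / (∑ i, (m0 i) ^ 2)) • Matrix.vecMulVec m0 m0
  P * X + X * P - P * X * P

/-- Chain of inequalities used in the uniqueness proof: if `M, M0` are PSD with
`A(M) = A(M0)`, `Y2 = A*λ + ξ` with `⟨ξ, M - M0⟩ = 0`, `(Y2)_T = I_T`, and
`I - Y2` is strictly positive on the complement, then
`Tr(M0) = Tr(M_T) + ⟨(Y2)_{T⊥}, M⟩`, and `Tr(M0) < Tr(M)` whenever `M_{T⊥} ≠ 0`. -/
theorem trace_chain_inequality (N m : ℕ) (m0 : Fin N → ℝ)
    (A : Matrix (Fin N) (Fin N) ℝ →ₗ[ℝ] (Fin m → ℝ))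
    (M M0 Y2 : Matrix (Fin N) (Fin N) ℝ)
    (hM0 : M0 = Matrix.vecMulVec m0 m0)
    (hM : M.PosSemidef) (hM0psd : M0.PosSemidef)
    (hA : A M = A M0)
    (hY2 : ∃ (lam : Fin m → ℝ) (ξ : Matrix (Fin N) (Fin N) ℝ),
      (∀ W : Matrix (Fin N) (Fin N) ℝ, frob (Y2 - ξ) W = lam ⬝ᵥ A W) ∧
      frob ξ (M - M0) = 0)
    (hT : projT N m0 Y2 = projT N m0 1)
    (hstrict : ∀ v : Fin N → ℝ, v ≠ 0 → (∑ i, m0 i * v i) = 0 →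
      0 < v ⬝ᵥ ((1 - Y2).mulVec v)) :
    M0.trace = (projT N m0 M).trace + frob (Y2 - projT N m0 Y2) M ∧
    (M - projT N m0 M ≠ 0 → M0.trace < M.trace) := by
  obtain ⟨lam, ξ, hYA, hξ⟩ := hY2
  set s : ℝ := ∑ i, (m0 i) ^ 2 with hs
  set P : Matrix (Fin N) (Fin N) ℝ := (1 / s) • Matrix.vecMulVec m0 m0 with hP
  set Q : Matrix (Fin N) (Fin N) ℝ := 1 - P with hQ
  have hm0zero : s = 0 → m0 = 0 := by
    intro h0
    have hsum : (∑ i, (m0 i) ^ 2 : ℝ) = 0 := by rw [← hs]; exact h0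
    funext i
    have h1 := (Finset.sum_eq_zero_iff_of_nonneg (fun i _ => sq_nonneg (m0 i))).mp
      hsum i (Finset.mem_univ i)
    exact pow_eq_zero_iff (by norm_num) |>.mp h1
  have hproj : ∀ X, projT N m0 X = P * X + X * P - P * X * P := by
    intro X; rw [hP, hs]; rfl
  have hPsymm : Pᵀ = P := by
    rw [hP]
    ext i j
    simp only [Matrix.transpose_apply, Matrix.smul_apply, Matrix.vecMulVec_apply,
      smul_eq_mul]
    ring
  have hQsymm : Qᵀ = Q := by
    rw [hQ, Matrix.transpose_sub, Matrix.transpose_one, hPsymm]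
  have hvv : Matrix.vecMulVec m0 m0 * Matrix.vecMulVec m0 m0 = s • Matrix.vecMulVec m0 m0 := by
    ext i j
    simp only [Matrix.mul_apply, Matrix.vecMulVec_apply, Matrix.smul_apply, smul_eq_mul, hs]
    calc ∑ k, m0 i * m0 k * (m0 k * m0 j)
        = ∑ k, (m0 k) ^ 2 * (m0 i * m0 j) :=
          Finset.sum_congr rfl fun k _ => by ring
      _ = (∑ k, (m0 k) ^ 2) * (m0 i * m0 j) := by rw [Finset.sum_mul]
  have hPP : P * P = P := by
    rcases eq_or_ne s 0 with h0 | h0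
    · have hz : m0 = 0 := hm0zero h0
      rw [hP, hz]
      ext i j
      simp [Matrix.mul_apply, Matrix.vecMulVec_apply]
    · rw [hP, Matrix.smul_mul, Matrix.mul_smul, hvv, smul_smul, smul_smul]
      congr 1
      field_simp
  have hQXQ : ∀ X, X - projT N m0 X = Q * X * Q := by
    intro X
    rw [hproj, hQ]
    noncomm_ring
  have hprojY2 : projT N m0 Y2 = P := by
    rw [hT, hproj, Matrix.mul_one, Matrix.one_mul, hPP]
    abel
  have hPM0 : P * M0 = M0 := by
    rcases eq_or_ne s 0 with h0 | h0
    · have hz : m0 = 0 := hm0zero h0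
      rw [hM0, hz]
      ext i j
      simp [Matrix.mul_apply, Matrix.vecMulVec_apply]
    · rw [hP, hM0, Matrix.smul_mul, hvv, smul_smul]
      rw [one_div, inv_mul_cancel₀ h0, one_smul]
  have hQM0Q : Q * M0 * Q = 0 := by
    rw [hQ, Matrix.sub_mul, Matrix.one_mul, hPM0, sub_self, Matrix.zero_mul]
  have htraceM0 : M0.trace = s := by
    rw [hM0, hs]
    simp only [Matrix.trace, Matrix.diag, Matrix.vecMulVec_apply]
    exact Finset.sum_congr rfl fun i _ => (pow_two (m0 i)).symm
  have hfrobPM0 : frob P M0 = M0.trace := by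
    rw [htraceM0, hP, hM0]
    simp only [frob, Matrix.smul_apply, Matrix.vecMulVec_apply, smul_eq_mul]
    have e1 : ∑ i, ∑ j, 1 / s * (m0 i * m0 j) * (m0 i * m0 j)
        = 1 / s * (s * s) := by
      calc ∑ i, ∑ j, 1 / s * (m0 i * m0 j) * (m0 i * m0 j)
          = ∑ i, ∑ j, 1 / s * ((m0 i) ^ 2 * (m0 j) ^ 2) :=
            Finset.sum_congr rfl fun i _ => Finset.sum_congr rfl fun j _ => by ring
        _ = ∑ i, 1 / s * ((m0 i) ^ 2 * ∑ j, (m0 j) ^ 2) := by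
            refine Finset.sum_congr rfl fun i _ => ?_
            rw [← Finset.mul_sum, ← Finset.mul_sum]
        _ = 1 / s * ((∑ i, (m0 i) ^ 2) * ∑ j, (m0 j) ^ 2) := by
            rw [← Finset.mul_sum, ← Finset.sum_mul]
        _ = 1 / s * (s * s) := by rw [← hs]
    rw [e1]
    rcases eq_or_ne s 0 with h0 | h0
    · rw [h0]; ring
    · field_simp
  have hYMM0 : frob Y2 M = frob Y2 M0 := by
    have h1 : frob Y2 (M - M0) = frob (Y2 - ξ) (M - M0) + frob ξ (M - M0) := by
      rw [frob_sub_left]; ring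
    have h2 : frob (Y2 - ξ) (M - M0) = 0 := by
      rw [hYA, map_sub, hA, sub_self, dotProduct_zero]
    have h3 : frob Y2 (M - M0) = 0 := by rw [h1, h2, hξ]; ring
    have h4 := frob_sub_right Y2 M M0
    rw [h3] at h4
    linarith
  have hY2perp : Y2 - P = Q * Y2 * Q := by
    have h := hQXQ Y2
    rwa [hprojY2] at h
  have hperpM0 : frob (Y2 - P) M0 = 0 := by
    rw [hY2perp, frob_sandwich _ _ _ hQsymm, hQM0Q, frob_zero_right]
  have htraceProjM : (projT N m0 M).trace = frob P M := by
    rw [hproj, frob_eq_trace, hPsymm]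
    rw [Matrix.trace_sub, Matrix.trace_add, Matrix.trace_mul_comm M P]
    have h : (P * M * P).trace = (P * M).trace := by
      rw [Matrix.mul_assoc, Matrix.trace_mul_comm P (M * P), Matrix.mul_assoc,
        Matrix.trace_mul_comm M (P * P), hPP, Matrix.trace_mul_comm P M,
        Matrix.trace_mul_comm M P]
    rw [h]; ring
  have hsplitM : frob Y2 M = frob P M + frob (Y2 - P) M := by
    rw [frob_sub_left]; ring
  have hsplitM0 : frob Y2 M0 = frob P M0 + frob (Y2 - P) M0 := by
    rw [frob_sub_left]; ring
  have part1 : M0.trace = (projT N m0 M).trace + frob (Y2 - projT N m0 Y2) M := by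
    rw [hprojY2, htraceProjM]
    have h : M0.trace = frob Y2 M0 := by rw [hsplitM0, hperpM0, hfrobPM0]; ring
    rw [h, ← hYMM0, hsplitM]
  refine ⟨part1, fun hne => ?_⟩
  have hQMQne : Q * M * Q ≠ 0 := by rw [← hQXQ M]; exact hne
  set Z : Matrix (Fin N) (Fin N) ℝ := 1 - Y2 with hZdef
  have hproj1 : projT N m0 1 = P := by
    rw [hproj, Matrix.mul_one, Matrix.one_mul, hPP]; abel
  have hprojZ : Z = Q * Z * Q := by
    have h1 := hQXQ 1
    have h2 := hQXQ Y2
    rw [hproj1] at h1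
    rw [hprojY2] at h2
    calc Z = (1 - P) - (Y2 - P) := by rw [hZdef]; abel
      _ = Q * 1 * Q - Q * Y2 * Q := by rw [← h1, ← h2]
      _ = Q * Z * Q := by rw [hZdef]; noncomm_ring
  have hQrow : ∀ k, ∑ j, Q k j * m0 j = 0 := by
    intro k
    rcases eq_or_ne s 0 with h0 | h0
    · simp [hm0zero h0]
    · have hQe : ∀ j, Q k j * m0 j
          = (if k = j then m0 j else 0) - 1 / s * (m0 k * (m0 j * m0 j)) := by
        intro j
        rw [hQ, hP]
        simp only [Matrix.sub_apply, Matrix.one_apply, Matrix.smul_apply,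
          Matrix.vecMulVec_apply, smul_eq_mul]
        split_ifs <;> ring
      rw [Finset.sum_congr rfl fun j _ => hQe j, Finset.sum_sub_distrib]
      have e1 : ∑ j, (if k = j then m0 j else 0) = m0 k := by
        simp
      have e2 : ∑ j, 1 / s * (m0 k * (m0 j * m0 j)) = 1 / s * (m0 k * s) := by
        rw [← Finset.mul_sum, ← Finset.mul_sum]
        have : ∑ j, m0 j * m0 j = s := by
          rw [hs]
          exact Finset.sum_congr rfl fun j _ => (pow_two (m0 j)).symm
        rw [this]
      rw [e1, e2]
      field_simp
      ring
  obtain ⟨B, hB⟩ : ∃ B : Matrix (Fin N) (Fin N) ℝ, M = Bᴴ * B := by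
    open scoped MatrixOrder in
    exact CStarAlgebra.nonneg_iff_eq_star_mul_self.mp hM.nonneg
  have hBT : M = Bᵀ * B := by rw [hB, Matrix.conjTranspose_eq_transpose_of_trivial]
  set C : Matrix (Fin N) (Fin N) ℝ := B * Q with hC
  have hQMQ : Q * M * Q = Cᵀ * C := by
    rw [hC, Matrix.transpose_mul, hQsymm, hBT]
    noncomm_ring
  have hrow : ∀ i, ∑ j, m0 j * C i j = 0 := by
    intro i
    calc ∑ j, m0 j * C i j
        = ∑ j, ∑ k, B i k * (Q k j * m0 j) := by
          refine Finset.sum_congr rfl fun j _ => ?_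
          rw [hC, Matrix.mul_apply, Finset.mul_sum]
          exact Finset.sum_congr rfl fun k _ => by ring
      _ = ∑ k, ∑ j, B i k * (Q k j * m0 j) := Finset.sum_comm
      _ = ∑ k, B i k * ∑ j, Q k j * m0 j := by
          refine Finset.sum_congr rfl fun k _ => ?_
          rw [Finset.mul_sum]
      _ = 0 := by simp [hQrow]
  have hfrobZM : frob Z M = ∑ i, (C i) ⬝ᵥ Z.mulVec (C i) := by
    conv_lhs => rw [hprojZ]
    rw [frob_sandwich _ _ _ hQsymm, hQMQ]
    exact frob_transpose_mul_self Z C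
  have hCne : ∃ i, C i ≠ 0 := by
    by_contra h
    push_neg at h
    apply hQMQne
    rw [hQMQ]
    have hc : C = 0 := by
      ext i j
      exact congrFun (h i) j
    rw [hc]
    simp
  have hpos : 0 < frob Z M := by
    rw [hfrobZM]
    obtain ⟨i0, hi0⟩ := hCne
    refine Finset.sum_pos' (fun i _ => ?_) ⟨i0, Finset.mem_univ i0, ?_⟩
    · rcases eq_or_ne (C i) 0 with h | h
      · rw [h]; simp
      · exact le_of_lt (hstrict (C i) h (hrow i))
    · exact hstrict (C i0) hi0 (hrow i0)
  have hTrM : M.trace = frob 1 M := (frob_one_left M).symm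
  have hZsplit : frob Z M = frob 1 M - frob Y2 M := by
    rw [hZdef, frob_sub_left]
  rw [part1, hprojY2, htraceProjM, hTrM]
  rw [hZsplit] at hpos
  linarith
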